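/- Let y = A·x_S + e where x_S ∈ ℝⁿ is K-sparse with support S, and A satisfies the RIP of order 3K with constant δ_{3K} and of order 4K with constant δ_{4K} < 1. Let U be an index set with |U| ≤ 3K and let u be the least-squares solution on U. Then ‖(u − x_S)_U‖ ≤ ( δ_{4K}/√(1−δ_{4K}²) )·‖(x_S)_{\overline{U}}‖ + τ₁·‖e‖, where τ₁ := √(1+δ_{3K})/(1−δ_{4K}). -/

import Mathlib

open Finset

/-- Euclidean norm of a vector. -/
noncomputable def euclNorm {d : ℕ} (x : Fin d → ℝ) : ℝ := Real.sqrt (∑ i, x i ^ 2)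

/-- The support of a vector, as a finite set of indices. -/
noncomputable def supp {d : ℕ} (x : Fin d → ℝ) : Finset (Fin d) :=
  Finset.univ.filter (fun i => x i ≠ 0)

/-- `restrict x T` agrees with `x` on `T` and is zero outside `T`. -/
def restrict {d : ℕ} (x : Fin d → ℝ) (T : Finset (Fin d)) : Fin d → ℝ :=
  fun i => if i ∈ T then x i else 0

/-- `A` satisfies the Restricted Isometry Property of order `L` with constant `δ ∈ (0,1)`. -/
def RIP {m d : ℕ} (A : Matrix (Fin m) (Fin d) ℝ) (L : ℕ) (δ : ℝ) : Prop :=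
  0 < δ ∧ δ < 1 ∧
  ∀ x : Fin d → ℝ, (supp x).card ≤ L →
    (1 - δ) * euclNorm x ^ 2 ≤ euclNorm (A.mulVec x) ^ 2 ∧
    euclNorm (A.mulVec x) ^ 2 ≤ (1 + δ) * euclNorm x ^ 2

/-- `u` is the least-squares solution on the index set `U`: it is supported on `U` and
`y - A u` is orthogonal to `A z` whenever `z` is supported on `U`. -/
def LeastSq {m d : ℕ} (A : Matrix (Fin m) (Fin d) ℝ) (y : Fin m → ℝ)
    (U : Finset (Fin d)) (u : Fin d → ℝ) : Prop :=
  supp u ⊆ U ∧ ∀ z : Fin d → ℝ, supp z ⊆ U →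
    ∑ i, (y i - A.mulVec u i) * A.mulVec z i = 0

lemma euclNorm_nonneg {d : ℕ} (x : Fin d → ℝ) : 0 ≤ euclNorm x := Real.sqrt_nonneg _

lemma euclNorm_sq {d : ℕ} (x : Fin d → ℝ) : euclNorm x ^ 2 = ∑ i, x i ^ 2 :=
  Real.sq_sqrt (Finset.sum_nonneg fun i _ => sq_nonneg _)

lemma mem_supp {d : ℕ} {x : Fin d → ℝ} {i : Fin d} : i ∈ supp x ↔ x i ≠ 0 := by
  simp [supp]

lemma supp_restrict {d : ℕ} (x : Fin d → ℝ) (T : Finset (Fin d)) :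
    supp (restrict x T) ⊆ T := by
  intro i hi
  rw [mem_supp] at hi
  by_contra hc
  exact hi (by simp [_root_.restrict, hc])

lemma rip_abs {m d : ℕ} {A : Matrix (Fin m) (Fin d) ℝ} {L : ℕ} {δ : ℝ}
    (hR : RIP A L δ) (v : Fin d → ℝ) (hc : (supp v).card ≤ L) :
    |(∑ i, (A.mulVec v) i ^ 2) - ∑ i, v i ^ 2| ≤ δ * ∑ i, v i ^ 2 := by
  obtain ⟨-, -, hmain⟩ := hR
  have h := hmain v hc
  rw [euclNorm_sq, euclNorm_sq] at h
  rw [abs_le]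
  constructor <;> nlinarith [h.1, h.2]

lemma sum_add_sq {k : ℕ} (p q : Fin k → ℝ) :
    ∑ i, (p i + q i) ^ 2 =
      (∑ i, p i ^ 2) + 2 * (∑ i, p i * q i) + ∑ i, q i ^ 2 := by
  have h : ∀ i : Fin k, (p i + q i) ^ 2 = p i ^ 2 + 2 * (p i * q i) + q i ^ 2 :=
    fun i => by ring
  simp_rw [h, Finset.sum_add_distrib, ← Finset.mul_sum]

lemma sum_sub_sq {k : ℕ} (p q : Fin k → ℝ) :
    ∑ i, (p i - q i) ^ 2 =
      (∑ i, p i ^ 2) - 2 * (∑ i, p i * q i) + ∑ i, q i ^ 2 := by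
  have h : ∀ i : Fin k, (p i - q i) ^ 2 = p i ^ 2 - 2 * (p i * q i) + q i ^ 2 :=
    fun i => by ring
  simp_rw [h]
  rw [Finset.sum_add_distrib, Finset.sum_sub_distrib, ← Finset.mul_sum]

lemma cross_bound_aux {m d : ℕ} {A : Matrix (Fin m) (Fin d) ℝ} {L : ℕ} {δ : ℝ}
    (hR : RIP A L δ) (a b : Fin d → ℝ)
    (hcard : (supp a ∪ supp b).card ≤ L) :
    |(∑ i, A.mulVec a i * A.mulVec b i) - ∑ i, a i * b i| ≤
      δ / 2 * ((∑ i, a i ^ 2) + ∑ i, b i ^ 2) := by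
  have hsub1 : supp (a + b) ⊆ supp a ∪ supp b := by
    intro i hi
    rw [mem_supp] at hi
    rw [Finset.mem_union, mem_supp, mem_supp]
    by_contra hc
    push_neg at hc
    exact hi (by simp [Pi.add_apply, hc.1, hc.2])
  have hsub2 : supp (a - b) ⊆ supp a ∪ supp b := by
    intro i hi
    rw [mem_supp] at hi
    rw [Finset.mem_union, mem_supp, mem_supp]
    by_contra hc
    push_neg at hc
    exact hi (by simp [Pi.sub_apply, hc.1, hc.2])
  have h1 := rip_abs hR (a + b) (le_trans (Finset.card_le_card hsub1) hcard)
  have h2 := rip_abs hR (a - b) (le_trans (Finset.card_le_card hsub2) hcard)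
  have hA1 : A.mulVec (a + b) = fun i => A.mulVec a i + A.mulVec b i := by
    rw [Matrix.mulVec_add]; rfl
  have hA2 : A.mulVec (a - b) = fun i => A.mulVec a i - A.mulVec b i := by
    rw [Matrix.mulVec_sub]; rfl
  rw [hA1] at h1
  rw [hA2] at h2
  simp only [Pi.add_apply] at h1
  simp only [Pi.sub_apply] at h2
  rw [sum_add_sq, sum_add_sq] at h1
  rw [sum_sub_sq, sum_sub_sq] at h2
  rw [abs_le] at h1 h2 ⊢
  constructor <;> nlinarith [h1.1, h1.2, h2.1, h2.2]

lemma euclNorm_eq_zero {d : ℕ} {x : Fin d → ℝ} (h : euclNorm x = 0) : x = 0 := by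
  have hs : (∑ i, x i ^ 2) = 0 := by
    have := euclNorm_sq x
    rw [h] at this
    simpa using this.symm
  funext i
  have := (Finset.sum_eq_zero_iff_of_nonneg (fun i _ => sq_nonneg (x i))).mp hs i
    (Finset.mem_univ i)
  exact pow_eq_zero_iff (by norm_num) |>.mp this

lemma supp_smul_subset {d : ℕ} (c : ℝ) (x : Fin d → ℝ) : supp (c • x) ⊆ supp x := by
  intro i hi
  rw [mem_supp] at hi ⊢
  intro hc
  exact hi (by simp [Pi.smul_apply, hc])

lemma cross_bound {m d : ℕ} {A : Matrix (Fin m) (Fin d) ℝ} {L : ℕ} {δ : ℝ}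
    (hR : RIP A L δ) (a b : Fin d → ℝ)
    (hcard : (supp a ∪ supp b).card ≤ L) :
    |(∑ i, A.mulVec a i * A.mulVec b i) - ∑ i, a i * b i| ≤
      δ * euclNorm a * euclNorm b := by
  rcases (euclNorm_nonneg a).eq_or_lt with h0 | hapos
  · obtain rfl : a = 0 := euclNorm_eq_zero h0.symm
    simp [Matrix.mulVec_zero, ← h0]
  rcases (euclNorm_nonneg b).eq_or_lt with h0 | hbpos
  · obtain rfl : b = 0 := euclNorm_eq_zero h0.symm
    simp [Matrix.mulVec_zero, ← h0]
  set Na := euclNorm a with hNa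
  set Nb := euclNorm b with hNb
  have hcard' : (supp (Nb • a) ∪ supp (Na • b)).card ≤ L := by
    refine le_trans (Finset.card_le_card ?_) hcard
    exact Finset.union_subset_union (supp_smul_subset _ _) (supp_smul_subset _ _)
  have key := cross_bound_aux hR (Nb • a) (Na • b) hcard'
  have hA1 : A.mulVec (Nb • a) = Nb • A.mulVec a := Matrix.mulVec_smul _ _ _
  have hA2 : A.mulVec (Na • b) = Na • A.mulVec b := Matrix.mulVec_smul _ _ _
  rw [hA1, hA2] at key
  simp only [Pi.smul_apply, smul_eq_mul, mul_pow] at key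
  have e1 : ∑ i, Nb * A.mulVec a i * (Na * A.mulVec b i)
      = (Na * Nb) * ∑ i, A.mulVec a i * A.mulVec b i := by
    rw [Finset.mul_sum]; exact Finset.sum_congr rfl fun i _ => by ring
  have e2 : ∑ i, Nb * a i * (Na * b i) = (Na * Nb) * ∑ i, a i * b i := by
    rw [Finset.mul_sum]; exact Finset.sum_congr rfl fun i _ => by ring
  have e3 : ∑ i, Nb ^ 2 * a i ^ 2 = Nb ^ 2 * ∑ i, a i ^ 2 := by rw [Finset.mul_sum]
  have e4 : ∑ i, Na ^ 2 * b i ^ 2 = Na ^ 2 * ∑ i, b i ^ 2 := by rw [Finset.mul_sum]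
  rw [e1, e2, e3, e4, ← euclNorm_sq, ← euclNorm_sq, ← hNa, ← hNb] at key
  rw [← mul_sub, abs_mul, abs_of_pos (mul_pos hapos hbpos)] at key
  have hfin : (Na * Nb) * |(∑ i, A.mulVec a i * A.mulVec b i) - ∑ i, a i * b i|
      ≤ (Na * Nb) * (δ * Na * Nb) := by
    calc (Na * Nb) * |(∑ i, A.mulVec a i * A.mulVec b i) - ∑ i, a i * b i|
        ≤ δ / 2 * (Nb ^ 2 * Na ^ 2 + Na ^ 2 * Nb ^ 2) := key
      _ = (Na * Nb) * (δ * Na * Nb) := by ring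
  exact le_of_mul_le_mul_left hfin (mul_pos hapos hbpos)

lemma sum_sq_split {d : ℕ} (x : Fin d → ℝ) (T : Finset (Fin d)) :
    ∑ i, x i ^ 2 = (∑ i, (restrict x T i) ^ 2) + ∑ i, (restrict x Tᶜ i) ^ 2 := by
  rw [← Finset.sum_add_distrib]
  refine Finset.sum_congr rfl fun i _ => ?_
  by_cases hi : i ∈ T <;> simp [_root_.restrict, hi]

lemma final_alg (a r En' δ D : ℝ) (H : ℝ) (ha : 0 ≤ a) (hr : 0 ≤ r) (hE : 0 ≤ En')
    (hδ0 : 0 < δ) (hδ1 : δ < 1) (hD : D = Real.sqrt (1 - δ ^ 2))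
    (hH0 : 0 ≤ H) (hH : H ^ 2 = a ^ 2 + r ^ 2)
    (hle : a ≤ δ * H + En') :
    a ≤ δ / D * r + En' / (1 - δ) := by
  have h1δ : (0:ℝ) < 1 - δ := by linarith
  have hD2 : D ^ 2 = 1 - δ ^ 2 := by rw [hD]; exact Real.sq_sqrt (by nlinarith)
  have hDpos : 0 < D := by
    rw [hD]; exact Real.sqrt_pos.mpr (by nlinarith)
  by_contra hcon
  push_neg at hcon
  -- a > δ/D * r + En'/(1-δ)
  have hEdiv : En' ≤ En' / (1 - δ) := by
    rw [le_div_iff₀ h1δ]; nlinarith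
  have hdr : 0 ≤ δ / D * r := by positivity
  have haE : 0 ≤ a - En' := by linarith
  have hsq : (a - En') ^ 2 ≤ δ ^ 2 * a ^ 2 + δ ^ 2 * r ^ 2 := by
    have h2 : a - En' ≤ δ * H := by linarith
    have h3 : (a - En') ^ 2 ≤ (δ * H) ^ 2 := by
      apply pow_le_pow_left₀ haE h2
    nlinarith [h3]
  have hexp : D * (1 - δ) * (δ / D * r + En' / (1 - δ)) = δ * r * (1 - δ) + D * En' := by
    field_simp
  have h1 : δ * r * (1 - δ) + D * En' < D * (1 - δ) * a := by
    have := mul_lt_mul_of_pos_left hcon (mul_pos hDpos h1δ)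
    rw [hexp] at this
    exact this
  have h2 : δ * r < D * a := by
    nlinarith [mul_nonneg hDpos.le hE]
  have hXZ : ((1 - δ) * a - En') * ((1 + δ) * a - En') ≤ δ ^ 2 * r ^ 2 := by
    nlinarith [hsq]
  have hDX : (1 - δ) * δ * r < D * ((1 - δ) * a - En') := by nlinarith [h1]
  have hDZ : (1 + δ) * δ * r < D * ((1 + δ) * a - En') := by
    nlinarith [h1, mul_lt_mul_of_pos_left h2 (by linarith : (0:ℝ) < 2 * δ)]
  have hα : 0 ≤ (1 - δ) * δ * r := by positivity
  have hβ : 0 ≤ (1 + δ) * δ * r := by positivity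
  have hprod := mul_lt_mul'' hDX hDZ hα hβ
  have hE1 : (D * ((1 - δ) * a - En')) * (D * ((1 + δ) * a - En'))
      = D ^ 2 * (((1 - δ) * a - En') * ((1 + δ) * a - En')) := by ring
  have hE2 := mul_le_mul_of_nonneg_left hXZ (sq_nonneg D)
  have hE3 : D ^ 2 * (δ ^ 2 * r ^ 2) = (1 - δ) * δ * r * ((1 + δ) * δ * r) := by
    rw [hD2]; ring
  linarith [hprod, hE1, hE2, hE3]

/-- estimation-step bound for the least-squares solution on `U`. -/
theorem cosamp_estimation_bound
    {m d K : ℕ} (A : Matrix (Fin m) (Fin d) ℝ) (xS : Fin d → ℝ) (e : Fin m → ℝ)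
    (δ3 δ4 : ℝ)
    (hxS : (supp xS).card ≤ K)
    (hRIP3 : RIP A (3 * K) δ3) (hRIP4 : RIP A (4 * K) δ4)
    (U : Finset (Fin d)) (hU : U.card ≤ 3 * K)
    (u : Fin d → ℝ) (hLS : LeastSq A (A.mulVec xS + e) U u) :
    euclNorm (restrict (u - xS) U) ≤
      δ4 / Real.sqrt (1 - δ4 ^ 2) * euclNorm (restrict xS Uᶜ) +
        Real.sqrt (1 + δ3) / (1 - δ4) * euclNorm e := by
  obtain ⟨hδ3pos, hδ3lt, hR3⟩ := hRIP3
  have hδ4pos := hRIP4.1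
  have hδ4lt := hRIP4.2.1
  set w : Fin d → ℝ := restrict (u - xS) U with hwdef
  set a : ℝ := euclNorm w with hadef
  set r : ℝ := euclNorm (restrict xS Uᶜ) with hrdef
  set En : ℝ := euclNorm e with hEdef
  set c : ℝ := Real.sqrt (1 + δ3) with hcdef
  set Hn : ℝ := euclNorm (u - xS) with hHdef
  have ha0 : 0 ≤ a := euclNorm_nonneg _
  have hr0 : 0 ≤ r := euclNorm_nonneg _
  have hE0 : 0 ≤ En := euclNorm_nonneg _
  have hc0 : 0 ≤ c := Real.sqrt_nonneg _
  have hH0 : 0 ≤ Hn := euclNorm_nonneg _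
  have hu0 : ∀ i, i ∉ U → u i = 0 := by
    intro i hi
    by_contra hc
    exact hi (hLS.1 (mem_supp.mpr hc))
  have hWsupp : supp w ⊆ U := supp_restrict _ _
  have hcardw : (supp w).card ≤ 3 * K := le_trans (Finset.card_le_card hWsupp) hU
  -- support of u - xS
  have hsupp_h : supp (u - xS) ⊆ U ∪ supp xS := by
    intro i hi
    rw [mem_supp] at hi
    rw [Finset.mem_union, mem_supp]
    by_contra hc
    push_neg at hc
    exact hi (by simp [Pi.sub_apply, hu0 i hc.1, hc.2])
  have hcard4 : (supp (u - xS) ∪ supp w).card ≤ 4 * K := by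
    have hsub : supp (u - xS) ∪ supp w ⊆ U ∪ supp xS :=
      Finset.union_subset hsupp_h (hWsupp.trans Finset.subset_union_left)
    calc (supp (u - xS) ∪ supp w).card ≤ (U ∪ supp xS).card := Finset.card_le_card hsub
      _ ≤ U.card + (supp xS).card := Finset.card_union_le _ _
      _ ≤ 3 * K + K := Nat.add_le_add hU hxS
      _ = 4 * K := by ring
  -- cross bound
  have hcross := cross_bound hRIP4 (u - xS) w hcard4
  -- inner product ⟨h, w⟩ = a²
  have hip : ∑ i, (u - xS) i * w i = a ^ 2 := by
    rw [hadef, euclNorm_sq]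
    refine Finset.sum_congr rfl fun i _ => ?_
    by_cases hi : i ∈ U <;> simp [hwdef, _root_.restrict, Pi.sub_apply, hi] <;> ring
  -- orthogonality
  have horth : ∑ i, A.mulVec (u - xS) i * A.mulVec w i = ∑ i, e i * A.mulVec w i := by
    have h0 := hLS.2 w hWsupp
    have hexp : ∀ i, ((A.mulVec xS + e) i - A.mulVec u i) * A.mulVec w i
        = e i * A.mulVec w i - A.mulVec (u - xS) i * A.mulVec w i := by
      intro i
      rw [Matrix.mulVec_sub]
      simp only [Pi.add_apply, Pi.sub_apply]
      ring
    rw [Finset.sum_congr rfl fun i _ => hexp i, Finset.sum_sub_distrib] at h0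
    linarith
  -- upper RIP on w, order 3K
  have hAw_le : euclNorm (A.mulVec w) ≤ c * a := by
    have h := (hR3 w hcardw).2
    have hnn : (0:ℝ) ≤ euclNorm (A.mulVec w) := euclNorm_nonneg _
    have : euclNorm (A.mulVec w) = Real.sqrt (euclNorm (A.mulVec w) ^ 2) :=
      (Real.sqrt_sq hnn).symm
    rw [this]
    calc Real.sqrt (euclNorm (A.mulVec w) ^ 2) ≤ Real.sqrt ((1 + δ3) * a ^ 2) :=
        Real.sqrt_le_sqrt h
      _ = c * a := by
        rw [Real.sqrt_mul (by linarith), Real.sqrt_sq ha0]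
  -- Cauchy-Schwarz
  have hCS : ∑ i, e i * A.mulVec w i ≤ En * euclNorm (A.mulVec w) := by
    have h := Finset.sum_mul_sq_le_sq_mul_sq Finset.univ e (A.mulVec w)
    rw [← euclNorm_sq, ← euclNorm_sq, ← hEdef] at h
    have hnn : 0 ≤ En * euclNorm (A.mulVec w) := mul_nonneg hE0 (euclNorm_nonneg _)
    nlinarith [h, hnn]
  -- H² = a² + r²
  have hHsq : Hn ^ 2 = a ^ 2 + r ^ 2 := by
    rw [hHdef, euclNorm_sq, sum_sq_split (u - xS) U, hadef, hrdef, euclNorm_sq, euclNorm_sq]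
    congr 1
    refine Finset.sum_congr rfl fun i _ => ?_
    by_cases hi : i ∈ U
    · simp [_root_.restrict, hi]
    · simp [_root_.restrict, Pi.sub_apply, hi, hu0 i hi]
  -- main inequality a² ≤ δ4 Hn a + c En a
  have key : a ^ 2 ≤ δ4 * Hn * a + c * En * a := by
    have h1 : a ^ 2 - ∑ i, A.mulVec (u - xS) i * A.mulVec w i ≤ δ4 * Hn * a := by
      have := (abs_le.mp hcross).1
      rw [hip] at this
      rw [← hHdef, ← hadef] at this
      linarith
    have h2 : ∑ i, e i * A.mulVec w i ≤ c * En * a := by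
      calc ∑ i, e i * A.mulVec w i ≤ En * euclNorm (A.mulVec w) := hCS
        _ ≤ En * (c * a) := mul_le_mul_of_nonneg_left hAw_le hE0
        _ = c * En * a := by ring
    rw [horth] at h1
    linarith
  -- divide by a (or trivial if a = 0)
  have hgoal : a ≤ δ4 / Real.sqrt (1 - δ4 ^ 2) * r + c * En / (1 - δ4) := by
    rcases ha0.eq_or_lt with h0 | hapos
    · have hrhs : 0 ≤ δ4 / Real.sqrt (1 - δ4 ^ 2) * r + c * En / (1 - δ4) := by
        have h1 : 0 ≤ δ4 / Real.sqrt (1 - δ4 ^ 2) * r :=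
          mul_nonneg (div_nonneg hδ4pos.le (Real.sqrt_nonneg _)) hr0
        have h2 : 0 ≤ c * En / (1 - δ4) :=
          div_nonneg (mul_nonneg hc0 hE0) (by linarith)
        linarith
      linarith [h0.symm ▸ hrhs]
    · have hle : a ≤ δ4 * Hn + c * En := by
        have hmul : a * a ≤ (δ4 * Hn + c * En) * a := by nlinarith [key]
        exact le_of_mul_le_mul_right hmul hapos
      exact final_alg a r (c * En) δ4 (Real.sqrt (1 - δ4 ^ 2)) Hn ha0 hr0
        (mul_nonneg hc0 hE0) hδ4pos hδ4lt rfl hH0 hHsq hle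
  calc a ≤ δ4 / Real.sqrt (1 - δ4 ^ 2) * r + c * En / (1 - δ4) := hgoal
    _ = δ4 / Real.sqrt (1 - δ4 ^ 2) * r + c / (1 - δ4) * En := by ring
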